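/- Let W : ℝ^{d×d} → [0,∞) be continuous with W(I) = min W = 0 and admit a quadratic expansion W(I+G) = Q(G) + r(G), where Q is a nonnegative quadratic form and |r(G)| ≤ ρ(|G|)|G|² for an increasing function ρ : [0,∞) → [0,∞] with ρ(0+) = 0. Let Ω ⊂ ℝ^d be bounded and measurable, (c_ε) positive with c_ε → 0, and (F_ε) ⊂ L²(Ω;ℝ^{d×d}) with c_ε‖F_ε‖_{L^∞(Ω)} → 0 and F_ε → F strongly in L²(Ω). Then lim_{ε→0} c_ε^{−2} ∫_Ω W(I + c_ε F_ε) dx = ∫_Ω Q(F) dx. -/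

import Mathlib

open MeasureTheory Filter Topology Bornology

/-- Frobenius norm of a real `d × d` matrix. -/
noncomputable def fro {d : ℕ} (A : Matrix (Fin d) (Fin d) ℝ) : ℝ :=
  Real.sqrt (∑ i, ∑ j, (A i j) ^ 2)

section AuxStmt8
open Matrix

section FroLemmas
variable {d : ℕ}

noncomputable def froE (A : Matrix (Fin d) (Fin d) ℝ) : EuclideanSpace ℝ (Fin d × Fin d) :=
  (WithLp.equiv 2 _).symm (fun p => A p.1 p.2)

lemma fro_eq_norm (A : Matrix (Fin d) (Fin d) ℝ) : fro A = ‖froE A‖ := by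
  rw [EuclideanSpace.norm_eq]
  unfold fro
  congr 1
  rw [Fintype.sum_prod_type]
  apply Finset.sum_congr rfl; intro i _
  apply Finset.sum_congr rfl; intro j _
  simp [froE, Real.norm_eq_abs, sq_abs]

lemma fro_nonneg (A : Matrix (Fin d) (Fin d) ℝ) : 0 ≤ fro A := Real.sqrt_nonneg _

lemma froE_add (A B : Matrix (Fin d) (Fin d) ℝ) : froE (A + B) = froE A + froE B := by
  ext p; rfl

lemma froE_smul (t : ℝ) (A : Matrix (Fin d) (Fin d) ℝ) : froE (t • A) = t • froE A := by
  ext p; rfl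

lemma froE_sub (A B : Matrix (Fin d) (Fin d) ℝ) : froE (A - B) = froE A - froE B := by
  ext p; rfl

lemma fro_smul (t : ℝ) (A : Matrix (Fin d) (Fin d) ℝ) : fro (t • A) = |t| * fro A := by
  rw [fro_eq_norm, fro_eq_norm, froE_smul, norm_smul, Real.norm_eq_abs]

lemma fro_add_le (A B : Matrix (Fin d) (Fin d) ℝ) : fro (A + B) ≤ fro A + fro B := by
  rw [fro_eq_norm, fro_eq_norm, fro_eq_norm, froE_add]; exact norm_add_le _ _

lemma fro_sub_le (A B : Matrix (Fin d) (Fin d) ℝ) : fro (A - B) ≤ fro A + fro B := by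
  rw [fro_eq_norm, fro_eq_norm, fro_eq_norm, froE_sub]; exact norm_sub_le _ _

lemma abs_entry_le_fro (A : Matrix (Fin d) (Fin d) ℝ) (i j : Fin d) : |A i j| ≤ fro A := by
  rw [← Real.sqrt_sq_eq_abs]
  apply Real.sqrt_le_sqrt
  calc A i j ^ 2 ≤ ∑ j', (A i j') ^ 2 :=
        Finset.single_le_sum (f := fun j' => (A i j') ^ 2)
          (fun j' _ => sq_nonneg _) (Finset.mem_univ j)
    _ ≤ ∑ i', ∑ j', (A i' j') ^ 2 :=
        Finset.single_le_sum (f := fun i' => ∑ j', (A i' j') ^ 2)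
          (fun i' _ => Finset.sum_nonneg fun _ _ => sq_nonneg _) (Finset.mem_univ i)

lemma fro_continuous : Continuous (fro : Matrix (Fin d) (Fin d) ℝ → ℝ) := by
  unfold fro
  apply Real.continuous_sqrt.comp
  apply continuous_finset_sum _ fun i _ => continuous_finset_sum _ fun j _ => ?_
  exact ((continuous_apply j).comp (continuous_apply i)).pow 2

end FroLemmas

section Bilin
variable {d : ℕ} (B : Matrix (Fin d) (Fin d) ℝ → Matrix (Fin d) (Fin d) ℝ → ℝ)

lemma B_zero (hBsmul : ∀ (t : ℝ) G H, B (t • G) H = t * B G H) (H) : B 0 H = 0 := by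
  have := hBsmul 0 0 H
  simpa using this

lemma B_sum_left (hBadd : ∀ G G' H, B (G + G') H = B G H + B G' H)
    (hB0 : ∀ H, B 0 H = 0) {ι : Type*} (s : Finset ι)
    (f : ι → Matrix (Fin d) (Fin d) ℝ) (H) :
    B (∑ i ∈ s, f i) H = ∑ i ∈ s, B (f i) H := by
  classical
  induction s using Finset.induction_on with
  | empty => simp [hB0]
  | insert a s h ih => rw [Finset.sum_insert h, hBadd, ih, Finset.sum_insert h]

lemma B_expand (hBsymm : ∀ G H, B G H = B H G)
    (hBadd : ∀ G G' H, B (G + G') H = B G H + B G' H)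
    (hBsmul : ∀ (t : ℝ) G H, B (t • G) H = t * B G H) (G H) :
    B G H = ∑ i, ∑ j, ∑ k, ∑ l,
      G i j * (H k l * B (Matrix.single i j 1) (Matrix.single k l 1)) := by
  have hB0 : ∀ H, B 0 H = 0 := B_zero B hBsmul
  have hsingle : ∀ (t : ℝ) i j H, B (Matrix.single i j t) H
      = t * B (Matrix.single i j 1) H := by
    intro t i j H
    rw [← hBsmul]
    congr 1
    rw [smul_single]
    simp
  have key : ∀ X H, B X H = ∑ i, ∑ j, X i j * B (Matrix.single i j 1) H := by
    intro X H
    conv_lhs => rw [matrix_eq_sum_single X]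
    rw [B_sum_left B hBadd hB0]
    apply Finset.sum_congr rfl; intro i _
    rw [B_sum_left B hBadd hB0]
    apply Finset.sum_congr rfl; intro j _
    exact hsingle _ _ _ _
  rw [key]
  apply Finset.sum_congr rfl; intro i _
  apply Finset.sum_congr rfl; intro j _
  simp only [← Finset.mul_sum]
  congr 1
  rw [hBsymm, key H]
  apply Finset.sum_congr rfl; intro k _
  apply Finset.sum_congr rfl; intro l _
  congr 1
  exact hBsymm _ _

lemma bilin_bound (hBsymm : ∀ G H, B G H = B H G)
    (hBadd : ∀ G G' H, B (G + G') H = B G H + B G' H)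
    (hBsmul : ∀ (t : ℝ) G H, B (t • G) H = t * B G H) :
    ∃ C : ℝ, 0 < C ∧ ∀ G H, |B G H| ≤ C * (fro G * fro H) := by
  refine ⟨(∑ i, ∑ j, ∑ k, ∑ l,
    |B (Matrix.single i j 1) (Matrix.single k l 1)|) + 1, ?_, ?_⟩
  · have : (0:ℝ) ≤ ∑ i, ∑ j, ∑ k, ∑ l,
        |B (Matrix.single i j (1:ℝ)) (Matrix.single k l 1)| :=
      Finset.sum_nonneg fun _ _ => Finset.sum_nonneg fun _ _ =>
        Finset.sum_nonneg fun _ _ => Finset.sum_nonneg fun _ _ => abs_nonneg _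
    linarith
  intro G H
  rw [B_expand B hBsymm hBadd hBsmul]
  have h1 : |∑ i, ∑ j, ∑ k, ∑ l,
      G i j * (H k l * B (Matrix.single i j 1) (Matrix.single k l 1))|
      ≤ ∑ i, ∑ j, ∑ k, ∑ l,
        |B (Matrix.single i j 1) (Matrix.single k l 1)| * (fro G * fro H) := by
    refine (Finset.abs_sum_le_sum_abs _ _).trans (Finset.sum_le_sum fun i _ => ?_)
    refine (Finset.abs_sum_le_sum_abs _ _).trans (Finset.sum_le_sum fun j _ => ?_)
    refine (Finset.abs_sum_le_sum_abs _ _).trans (Finset.sum_le_sum fun k _ => ?_)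
    refine (Finset.abs_sum_le_sum_abs _ _).trans (Finset.sum_le_sum fun l _ => ?_)
    rw [abs_mul, abs_mul]
    have hG := abs_entry_le_fro G i j
    have hH := abs_entry_le_fro H k l
    set b := |B (Matrix.single i j (1:ℝ)) (Matrix.single k l 1)| with hbdef
    have h3 : (0:ℝ) ≤ b := abs_nonneg _
    calc |G i j| * (|H k l| * b)
        ≤ fro G * (fro H * b) :=
          mul_le_mul hG (mul_le_mul_of_nonneg_right hH h3)
            (mul_nonneg (abs_nonneg _) h3) (fro_nonneg G)
      _ = b * (fro G * fro H) := by ring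
  refine h1.trans ?_
  simp only [← Finset.sum_mul]
  have hfro : (0:ℝ) ≤ fro G * fro H := mul_nonneg (fro_nonneg G) (fro_nonneg H)
  nlinarith [hfro]

lemma Q_cont (hBsymm : ∀ G H, B G H = B H G)
    (hBadd : ∀ G G' H, B (G + G') H = B G H + B G' H)
    (hBsmul : ∀ (t : ℝ) G H, B (t • G) H = t * B G H) :
    Continuous (fun G : Matrix (Fin d) (Fin d) ℝ => B G G) := by
  have : (fun G : Matrix (Fin d) (Fin d) ℝ => B G G)
      = fun G => ∑ i, ∑ j, ∑ k, ∑ l,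
        G i j * (G k l * B (Matrix.single i j 1) (Matrix.single k l 1)) :=
    funext fun G => B_expand B hBsymm hBadd hBsmul G G
  rw [this]
  refine continuous_finset_sum _ fun i _ => continuous_finset_sum _ fun j _ =>
    continuous_finset_sum _ fun k _ => continuous_finset_sum _ fun l _ => ?_
  have hij : Continuous fun G : Matrix (Fin d) (Fin d) ℝ => G i j :=
    (continuous_apply j).comp (continuous_apply i)
  have hkl : Continuous fun G : Matrix (Fin d) (Fin d) ℝ => G k l :=
    (continuous_apply l).comp (continuous_apply k)
  exact hij.mul (hkl.mul continuous_const)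

end Bilin

end AuxStmt8

set_option maxHeartbeats 1000000 in
/-- Continuity of the rescaled energy under strong `L²` convergence with an `L^∞` control:
`lim_{ε→0} c_ε^{−2} ∫_Ω W(I + c_ε F_ε) dx = ∫_Ω Q(F) dx`. -/
theorem stmt8 {d : ℕ} (hd : 2 ≤ d) (Ω : Set (Fin d → ℝ))
    (hΩm : MeasurableSet Ω) (hΩb : IsBounded Ω)
    (W Q : Matrix (Fin d) (Fin d) ℝ → ℝ)
    (B : Matrix (Fin d) (Fin d) ℝ → Matrix (Fin d) (Fin d) ℝ → ℝ)
    (hWcont : Continuous W) (hWnonneg : ∀ F, 0 ≤ W F) (hWI : W 1 = 0)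
    -- `Q` is the nonnegative quadratic form of a symmetric bilinear form `B`
    (hQB : ∀ G, Q G = B G G)
    (hBsymm : ∀ G H, B G H = B H G)
    (hBadd : ∀ G G' H, B (G + G') H = B G H + B G' H)
    (hBsmul : ∀ (t : ℝ) G H, B (t • G) H = t * B G H)
    (hQnonneg : ∀ G, 0 ≤ Q G)
    -- the expansion error: `|r(G)| ≤ ρ(|G|)|G|²`, `ρ` increasing with `ρ(0+) = 0`
    (ρ : ℝ → ENNReal) (hρmono : Monotone ρ)
    (hρ0 : Filter.Tendsto ρ (nhdsWithin 0 (Set.Ioi (0:ℝ))) (nhds 0))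
    (hr : ∀ G, ENNReal.ofReal |W (1 + G) - Q G|
      ≤ ρ (fro G) * ENNReal.ofReal ((fro G) ^ 2))
    -- sequences
    (c : ℕ → ℝ) (hc : ∀ n, 0 < c n) (hc0 : Filter.Tendsto c Filter.atTop (nhds 0))
    (F : ℕ → (Fin d → ℝ) → Matrix (Fin d) (Fin d) ℝ)
    (Flim : (Fin d → ℝ) → Matrix (Fin d) (Fin d) ℝ)
    (hFmeas : ∀ n, AEStronglyMeasurable (F n) (volume.restrict Ω))
    (hFlimmeas : AEStronglyMeasurable Flim (volume.restrict Ω))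
    (hFL2 : ∀ n, IntegrableOn (fun x => (fro (F n x)) ^ 2) Ω volume)
    (hFlimL2 : IntegrableOn (fun x => (fro (Flim x)) ^ 2) Ω volume)
    -- `c_ε ‖F_ε‖_{L^∞(Ω)} → 0`
    (K : ℕ → ℝ)
    (hK : ∀ n, ∀ᵐ x ∂(volume.restrict Ω), fro (F n x) ≤ K n)
    (hcK : Filter.Tendsto (fun n => c n * K n) Filter.atTop (nhds 0))
    -- `F_ε → F` strongly in `L²(Ω)`
    (hstrong : Filter.Tendsto (fun n => ∫ x in Ω, (fro (F n x - Flim x)) ^ 2)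
      Filter.atTop (nhds 0)) :
    Filter.Tendsto (fun n => ((c n) ^ 2)⁻¹ * ∫ x in Ω, W (1 + c n • F n x))
      Filter.atTop (nhds (∫ x in Ω, Q (Flim x))) := by
  classical
  have hFL2' : ∀ n, Integrable (fun x => (fro (F n x)) ^ 2) (volume.restrict Ω) :=
    fun n => hFL2 n
  have hFlimL2' : Integrable (fun x => (fro (Flim x)) ^ 2) (volume.restrict Ω) := hFlimL2
  obtain ⟨C, hC0, hC⟩ := bilin_bound B hBsymm hBadd hBsmul
  have hQcont : Continuous Q := by
    have h : Q = fun G => B G G := funext hQB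
    rw [h]; exact Q_cont B hBsymm hBadd hBsmul
  have hQbound : ∀ G, |Q G| ≤ C * (fro G) ^ 2 := by
    intro G
    calc |Q G| = |B G G| := by rw [hQB]
      _ ≤ C * (fro G * fro G) := hC G G
      _ = C * (fro G) ^ 2 := by ring
  have hQdiff : ∀ G H, Q G - Q H = B (G - H) (G + H) := by
    intro G H
    have e0 : G - H = G + (-1 : ℝ) • H := by rw [neg_one_smul]; abel
    have e1 : B (G - H) (G + H) = B G (G + H) + (-1) * B H (G + H) := by
      rw [e0, hBadd, hBsmul]
    rw [e1, hBsymm G (G + H), hBsymm H (G + H), hBadd, hBadd,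
      hQB, hQB, hBsymm H G]
    ring
  have hQsmul : ∀ (t : ℝ) G, Q (t • G) = t ^ 2 * Q G := by
    intro t G
    rw [hQB, hQB, hBsmul, hBsymm, hBsmul, hBsymm]; ring
  -- measurability and integrability
  have hmF : ∀ n, AEStronglyMeasurable (fun x => Q (F n x)) (volume.restrict Ω) :=
    fun n => hQcont.comp_aestronglyMeasurable (hFmeas n)
  have hmFlim : AEStronglyMeasurable (fun x => Q (Flim x)) (volume.restrict Ω) :=
    hQcont.comp_aestronglyMeasurable hFlimmeas
  have hQint : ∀ n, Integrable (fun x => Q (F n x)) (volume.restrict Ω) := by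
    intro n
    refine Integrable.mono' ((hFL2' n).const_mul C) (hmF n) ?_
    filter_upwards with x
    rw [Real.norm_eq_abs]; exact hQbound _
  have hQlimint : Integrable (fun x => Q (Flim x)) (volume.restrict Ω) := by
    refine Integrable.mono' (hFlimL2'.const_mul C) hmFlim ?_
    filter_upwards with x
    rw [Real.norm_eq_abs]; exact hQbound _
  have hGint : ∀ n, Integrable (fun x => (fro (F n x - Flim x)) ^ 2) (volume.restrict Ω) := by
    intro n
    refine Integrable.mono'
      (((hFL2' n).const_mul 2).add (hFlimL2'.const_mul 2))
      ((fro_continuous.pow 2).comp_aestronglyMeasurable ((hFmeas n).sub hFlimmeas)) ?_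
    filter_upwards with x
    simp only [Pi.add_apply]
    rw [Real.norm_eq_abs, abs_of_nonneg (sq_nonneg _)]
    have h1 : fro (F n x - Flim x) ≤ fro (F n x) + fro (Flim x) := fro_sub_le _ _
    have h2 : fro (F n x - Flim x) ^ 2 ≤ (fro (F n x) + fro (Flim x)) ^ 2 :=
      pow_le_pow_left₀ (fro_nonneg _) h1 2
    nlinarith [sq_nonneg (fro (F n x) - fro (Flim x))]
  set S : ℝ := ∫ x in Ω, (fro (Flim x)) ^ 2 with hSdef
  have hS0 : 0 ≤ S := integral_nonneg fun x => sq_nonneg _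
  set s : ℕ → ℝ := fun n => ∫ x in Ω, (fro (F n x - Flim x)) ^ 2 with hsdef
  have hs0 : ∀ n, 0 ≤ s n := fun n => integral_nonneg fun x => sq_nonneg _
  set SN : ℕ → ℝ := fun n => ∫ x in Ω, (fro (F n x)) ^ 2 with hSNdef
  have hSN0 : ∀ n, 0 ≤ SN n := fun n => integral_nonneg fun x => sq_nonneg _
  have hSNle : ∀ n, SN n ≤ 2 * s n + 2 * S := by
    intro n
    have hpt : ∀ x, (fro (F n x)) ^ 2
        ≤ 2 * (fro (F n x - Flim x)) ^ 2 + 2 * (fro (Flim x)) ^ 2 := by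
      intro x
      have h1 : fro (F n x) ≤ fro (F n x - Flim x) + fro (Flim x) := by
        have : F n x = (F n x - Flim x) + Flim x := by abel
        calc fro (F n x) = fro ((F n x - Flim x) + Flim x) := by rw [← this]
          _ ≤ fro (F n x - Flim x) + fro (Flim x) := fro_add_le _ _
      have h2 : fro (F n x) ^ 2 ≤ (fro (F n x - Flim x) + fro (Flim x)) ^ 2 :=
        pow_le_pow_left₀ (fro_nonneg _) h1 2
      nlinarith [sq_nonneg (fro (F n x - Flim x) - fro (Flim x))]
    have hint2 : Integrable
        (fun x => 2 * (fro (F n x - Flim x)) ^ 2 + 2 * (fro (Flim x)) ^ 2)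
        (volume.restrict Ω) := ((hGint n).const_mul 2).add (hFlimL2'.const_mul 2)
    have hmono := integral_mono (μ := volume.restrict Ω)
      (f := fun x => (fro (F n x)) ^ 2)
      (g := fun x => 2 * (fro (F n x - Flim x)) ^ 2 + 2 * (fro (Flim x)) ^ 2)
      (hFL2' n) hint2 hpt
    have heq : ∫ x in Ω, (2 * (fro (F n x - Flim x)) ^ 2 + 2 * (fro (Flim x)) ^ 2)
        = 2 * s n + 2 * S := by
      rw [integral_add ((hGint n).const_mul 2) (hFlimL2'.const_mul 2),
        integral_const_mul, integral_const_mul]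
    rw [heq] at hmono
    exact hmono
  -- Step 1 : ∫ Q(F n) → ∫ Q(Flim)
  have hStep1 : Tendsto (fun n => ∫ x in Ω, Q (F n x)) atTop (𝓝 (∫ x in Ω, Q (Flim x))) := by
    rw [← tendsto_sub_nhds_zero_iff, NormedAddCommGroup.tendsto_nhds_zero]
    intro ε hε
    set t : ℝ := ε / (2 * C * (S + 1)) with htdef
    have ht0 : 0 < t := by positivity
    set u : ℝ := 1 / t with hudef
    have hu0 : 0 < u := by positivity
    have hut : t * u = 1 := by
      rw [hudef]; field_simp
    have hCu : 0 < C * (1 + u) := by positivity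
    have hb : ∀ n, |(∫ x in Ω, Q (F n x)) - ∫ x in Ω, Q (Flim x)|
        ≤ C * (1 + u) * s n + C * t * S := by
      intro n
      have hptw : ∀ x, |Q (F n x) - Q (Flim x)|
          ≤ C * (1 + u) * (fro (F n x - Flim x)) ^ 2 + C * t * (fro (Flim x)) ^ 2 := by
        intro x
        have ha : 0 ≤ fro (F n x - Flim x) := fro_nonneg _
        have hbnn : 0 ≤ fro (Flim x) := fro_nonneg _
        have hf : fro (F n x + Flim x) ≤ fro (F n x - Flim x) + 2 * fro (Flim x) := by
          have e : F n x + Flim x = (F n x - Flim x) + (2:ℝ) • Flim x := by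
            rw [two_smul]; abel
          calc fro (F n x + Flim x) = fro ((F n x - Flim x) + (2:ℝ) • Flim x) := by rw [← e]
            _ ≤ fro (F n x - Flim x) + fro ((2:ℝ) • Flim x) := fro_add_le _ _
            _ = fro (F n x - Flim x) + 2 * fro (Flim x) := by
                rw [fro_smul]; norm_num
        have hquad : 0 ≤ u * (fro (F n x - Flim x)) ^ 2
            - 2 * (fro (F n x - Flim x) * fro (Flim x)) + t * (fro (Flim x)) ^ 2 := by
          have h := mul_nonneg hu0.le (sq_nonneg (fro (F n x - Flim x) - t * fro (Flim x)))
          have e : u * (fro (F n x - Flim x) - t * fro (Flim x)) ^ 2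
              = u * (fro (F n x - Flim x)) ^ 2
                - 2 * (t * u) * (fro (F n x - Flim x) * fro (Flim x))
                + (t * u) * (t * ((fro (Flim x)) ^ 2)) := by ring
          rw [e, hut] at h
          linarith
        rw [hQdiff]
        calc |B (F n x - Flim x) (F n x + Flim x)|
            ≤ C * (fro (F n x - Flim x) * fro (F n x + Flim x)) := hC _ _
          _ ≤ C * (fro (F n x - Flim x) * (fro (F n x - Flim x) + 2 * fro (Flim x))) := by
              exact mul_le_mul_of_nonneg_left (mul_le_mul_of_nonneg_left hf ha) hC0.le
          _ ≤ C * ((1 + u) * (fro (F n x - Flim x)) ^ 2 + t * (fro (Flim x)) ^ 2) := by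
              apply mul_le_mul_of_nonneg_left _ hC0.le
              nlinarith [hquad]
          _ = C * (1 + u) * (fro (F n x - Flim x)) ^ 2 + C * t * (fro (Flim x)) ^ 2 := by
              ring
      have hint : Integrable (fun x => C * (1 + u) * (fro (F n x - Flim x)) ^ 2
          + C * t * (fro (Flim x)) ^ 2) (volume.restrict Ω) :=
        ((hGint n).const_mul _).add (hFlimL2'.const_mul _)
      calc |(∫ x in Ω, Q (F n x)) - ∫ x in Ω, Q (Flim x)|
          = |∫ x in Ω, (Q (F n x) - Q (Flim x))| := by
            rw [integral_sub (hQint n) hQlimint]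
        _ ≤ ∫ x in Ω, |Q (F n x) - Q (Flim x)| := by
            simpa [Real.norm_eq_abs] using norm_integral_le_integral_norm
              (μ := volume.restrict Ω) (f := fun x => Q (F n x) - Q (Flim x))
        _ ≤ ∫ x in Ω, (C * (1 + u) * (fro (F n x - Flim x)) ^ 2
              + C * t * (fro (Flim x)) ^ 2) :=
            integral_mono ((hQint n).sub hQlimint).abs hint (fun x => hptw x)
        _ = C * (1 + u) * s n + C * t * S := by
            rw [integral_add ((hGint n).const_mul _) (hFlimL2'.const_mul _),
              integral_const_mul, integral_const_mul]
    have h2 : C * t * S ≤ ε / 2 := by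
      have hD : (0:ℝ) < 2 * C * (S + 1) := by positivity
      have e : C * t * S = (C * S * ε) / (2 * C * (S + 1)) := by
        rw [htdef]; ring
      rw [e, div_le_div_iff₀ hD (by norm_num : (0:ℝ) < 2)]
      nlinarith [mul_pos hC0 hε]
    have hev1 : ∀ᶠ n in atTop, s n < (ε / 2) / (C * (1 + u)) :=
      hstrong.eventually_lt_const (by positivity)
    filter_upwards [hev1] with n hn
    rw [Real.norm_eq_abs]
    have h1 : C * (1 + u) * s n < ε / 2 := by
      have h := (lt_div_iff₀ hCu).mp hn
      calc C * (1 + u) * s n = s n * (C * (1 + u)) := by ring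
        _ < ε / 2 := h
    calc |(∫ x in Ω, Q (F n x)) - ∫ x in Ω, Q (Flim x)|
        ≤ C * (1 + u) * s n + C * t * S := hb n
      _ < ε := by linarith
  -- Step 2 : the rescaled energy minus ∫ Q(F n) tends to 0
  have hStep2 : Tendsto (fun n =>
      ((c n) ^ 2)⁻¹ * (∫ x in Ω, W (1 + c n • F n x)) - ∫ x in Ω, Q (F n x))
      atTop (𝓝 0) := by
    rw [NormedAddCommGroup.tendsto_nhds_zero]
    intro ε hε
    set M : ℝ := 2 + 2 * S with hMdef
    have hM0 : 0 < M := by rw [hMdef]; linarith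
    set η : ℝ := ε / (M + 1) with hηdef
    have hη0 : 0 < η := by positivity
    have hρev : ∀ᶠ x in 𝓝[>] (0:ℝ), ρ x ≤ ENNReal.ofReal η :=
      ENNReal.tendsto_nhds_zero.mp hρ0 (ENNReal.ofReal η) (ENNReal.ofReal_pos.mpr hη0)
    rw [eventually_nhdsWithin_iff, Metric.eventually_nhds_iff] at hρev
    obtain ⟨δ, hδ0, hδ⟩ := hρev
    have hρδ : ρ (δ / 2) ≤ ENNReal.ofReal η := by
      apply hδ
      · rw [Real.dist_eq, sub_zero, abs_of_pos (half_pos hδ0)]; linarith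
      · exact Set.mem_Ioi.mpr (half_pos hδ0)
    have hevK : ∀ᶠ n in atTop, |c n * K n| < δ / 2 := by
      have h := NormedAddCommGroup.tendsto_nhds_zero.mp hcK (δ / 2) (half_pos hδ0)
      simpa only [Real.norm_eq_abs, sub_zero] using h
    have hevs : ∀ᶠ n in atTop, s n ≤ 1 :=
      hstrong.eventually_le_const one_pos
    filter_upwards [hevK, hevs] with n hnK hns
    have hcn2 : (0:ℝ) < (c n) ^ 2 := pow_pos (hc n) 2
    have hfro : ∀ x, fro (c n • F n x) = c n * fro (F n x) := by
      intro x; rw [fro_smul, abs_of_pos (hc n)]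
    have hae : ∀ᵐ x ∂(volume.restrict Ω),
        |W (1 + c n • F n x) - Q (c n • F n x)|
          ≤ η * ((c n) ^ 2 * (fro (F n x)) ^ 2) := by
      filter_upwards [hK n] with x hx
      have hle : fro (c n • F n x) ≤ δ / 2 := by
        rw [hfro x]
        calc c n * fro (F n x) ≤ c n * K n :=
              mul_le_mul_of_nonneg_left hx (hc n).le
          _ ≤ |c n * K n| := le_abs_self _
          _ ≤ δ / 2 := hnK.le
      have hρle : ρ (fro (c n • F n x)) ≤ ENNReal.ofReal η :=
        le_trans (hρmono hle) hρδ
      have h1 := hr (c n • F n x)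
      have h2 : ρ (fro (c n • F n x)) * ENNReal.ofReal ((fro (c n • F n x)) ^ 2)
          ≤ ENNReal.ofReal η * ENNReal.ofReal ((fro (c n • F n x)) ^ 2) :=
        mul_le_mul_left hρle _
      have h3 := h1.trans h2
      rw [← ENNReal.ofReal_mul hη0.le] at h3
      have h4 := (ENNReal.ofReal_le_ofReal_iff (by positivity)).mp h3
      calc |W (1 + c n • F n x) - Q (c n • F n x)|
          ≤ η * (fro (c n • F n x)) ^ 2 := h4
        _ = η * ((c n) ^ 2 * (fro (F n x)) ^ 2) := by rw [hfro x]; ring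
    have hWm : AEStronglyMeasurable (fun x => W (1 + c n • F n x)) (volume.restrict Ω) :=
      hWcont.comp_aestronglyMeasurable
        (aestronglyMeasurable_const.add ((hFmeas n).const_smul (c n)))
    have hQc : Integrable (fun x => Q (c n • F n x)) (volume.restrict Ω) := by
      have e : (fun x => Q (c n • F n x)) = fun x => (c n) ^ 2 * Q (F n x) :=
        funext fun x => hQsmul _ _
      rw [e]; exact (hQint n).const_mul _
    have hWint : Integrable (fun x => W (1 + c n • F n x)) (volume.restrict Ω) := by
      refine Integrable.mono' ((hFL2' n).const_mul ((C + η) * (c n) ^ 2)) hWm ?_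
      filter_upwards [hae] with x hx
      rw [Real.norm_eq_abs, abs_of_nonneg (hWnonneg _)]
      have hq : |Q (c n • F n x)| ≤ C * ((c n) ^ 2 * (fro (F n x)) ^ 2) := by
        have h := hQbound (c n • F n x)
        rw [hfro x] at h
        calc |Q (c n • F n x)| ≤ C * (c n * fro (F n x)) ^ 2 := h
          _ = C * ((c n) ^ 2 * (fro (F n x)) ^ 2) := by ring
      calc W (1 + c n • F n x)
          = (W (1 + c n • F n x) - Q (c n • F n x)) + Q (c n • F n x) := by ring
        _ ≤ |W (1 + c n • F n x) - Q (c n • F n x)| + |Q (c n • F n x)| :=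
            add_le_add (le_abs_self _) (le_abs_self _)
        _ ≤ η * ((c n) ^ 2 * (fro (F n x)) ^ 2) + C * ((c n) ^ 2 * (fro (F n x)) ^ 2) :=
            add_le_add hx hq
        _ = (C + η) * (c n) ^ 2 * (fro (F n x)) ^ 2 := by ring
    have hintb : Integrable (fun x => η * ((c n) ^ 2 * (fro (F n x)) ^ 2))
        (volume.restrict Ω) := by
      have h := (hFL2' n).const_mul (η * (c n) ^ 2)
      simpa [mul_assoc] using h
    have hIb : |(∫ x in Ω, W (1 + c n • F n x)) - ∫ x in Ω, Q (c n • F n x)|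
        ≤ η * ((c n) ^ 2 * SN n) := by
      rw [← integral_sub hWint hQc]
      calc |∫ x in Ω, (W (1 + c n • F n x) - Q (c n • F n x))|
          ≤ ∫ x in Ω, |W (1 + c n • F n x) - Q (c n • F n x)| := by
            simpa [Real.norm_eq_abs] using norm_integral_le_integral_norm
              (μ := volume.restrict Ω)
              (f := fun x => W (1 + c n • F n x) - Q (c n • F n x))
        _ ≤ ∫ x in Ω, η * ((c n) ^ 2 * (fro (F n x)) ^ 2) :=
            integral_mono_ae (hWint.sub hQc).abs hintb hae
        _ = η * ((c n) ^ 2 * SN n) := by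
            rw [integral_const_mul, integral_const_mul]
    have hQceq : ∫ x in Ω, Q (c n • F n x) = (c n) ^ 2 * ∫ x in Ω, Q (F n x) := by
      have e : (fun x => Q (c n • F n x)) = fun x => (c n) ^ 2 * Q (F n x) :=
        funext fun x => hQsmul _ _
      rw [e, integral_const_mul]
    rw [Real.norm_eq_abs]
    have hfinal : |((c n) ^ 2)⁻¹ * (∫ x in Ω, W (1 + c n • F n x)) - ∫ x in Ω, Q (F n x)|
        ≤ η * SN n := by
      have e2 : ((c n) ^ 2)⁻¹ * (∫ x in Ω, W (1 + c n • F n x)) - ∫ x in Ω, Q (F n x)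
          = ((c n) ^ 2)⁻¹
            * ((∫ x in Ω, W (1 + c n • F n x)) - ∫ x in Ω, Q (c n • F n x)) := by
        rw [hQceq]
        rw [mul_sub, ← mul_assoc, inv_mul_cancel₀ hcn2.ne', one_mul]
      rw [e2, abs_mul, abs_of_pos (inv_pos.mpr hcn2)]
      calc ((c n) ^ 2)⁻¹ * |(∫ x in Ω, W (1 + c n • F n x)) - ∫ x in Ω, Q (c n • F n x)|
          ≤ ((c n) ^ 2)⁻¹ * (η * ((c n) ^ 2 * SN n)) :=
            mul_le_mul_of_nonneg_left hIb (inv_pos.mpr hcn2).le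
        _ = η * SN n := by rw [← mul_assoc, mul_comm ((c n)^2)⁻¹ η, mul_assoc, ← mul_assoc ((c n)^2)⁻¹, inv_mul_cancel₀ hcn2.ne', one_mul]
    have hSNM : SN n ≤ M := by
      have h := hSNle n
      rw [hMdef]; linarith
    calc |((c n) ^ 2)⁻¹ * (∫ x in Ω, W (1 + c n • F n x)) - ∫ x in Ω, Q (F n x)|
        ≤ η * SN n := hfinal
      _ ≤ η * M := mul_le_mul_of_nonneg_left hSNM hη0.le
      _ < ε := by
          have h1 : η * (M + 1) = ε := by
            rw [hηdef]; field_simp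
          nlinarith [hη0]
  have htot := hStep2.add hStep1
  rw [zero_add] at htot
  have heq : (fun n => ((c n) ^ 2)⁻¹ * ∫ x in Ω, W (1 + c n • F n x))
      = fun n => (((c n) ^ 2)⁻¹ * (∫ x in Ω, W (1 + c n • F n x))
          - ∫ x in Ω, Q (F n x)) + ∫ x in Ω, Q (F n x) := by
    funext n; ring
  rw [heq]
  exact htot
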